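/- Let x₁,...,x_T be vectors in ℝ^d and let H be a real symmetric positive definite d×d matrix. Define A_t = H + ∑_{s=1}^t x_s x_sᵀ. Then ∑_{t=1}^T min(x_tᵀ A_{t-1}⁻¹ x_t, 1) ≤ 2·(log det(A_T) − log det(H)). -/

import Mathlib

open Matrix Finset

lemma vecMulVec_posSemidef {d : ℕ} (v : Fin d → ℝ) :
    (vecMulVec v v).PosSemidef := by
  refine .of_dotProduct_mulVec_nonneg ?_ ?_
  · ext i j
    simp [vecMulVec, conjTranspose, mul_comm]
  · intro y
    have h : ∀ i, (vecMulVec v v *ᵥ y) i = v i * (v ⬝ᵥ y) := by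
      intro i
      simp [mulVec, vecMulVec, dotProduct, Finset.mul_sum, mul_assoc]
    have : star y ⬝ᵥ (vecMulVec v v *ᵥ y) = (v ⬝ᵥ y) * (v ⬝ᵥ y) := by
      simp only [dotProduct, h, star_trivial]
      rw [Finset.sum_mul]
      exact Finset.sum_congr rfl fun i _ => by ring
    rw [this]
    exact mul_self_nonneg _

lemma min_le_two_log {u : ℝ} (hu : 0 ≤ u) : min u 1 ≤ 2 * Real.log (1 + u) := by
  have h1 : 0 < 1 + u := by linarith
  have hlog : 1 - (1 + u)⁻¹ ≤ Real.log (1 + u) := Real.one_sub_inv_le_log_of_pos h1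
  have key : u / (1 + u) ≤ Real.log (1 + u) := by
    have : 1 - (1 + u)⁻¹ = u / (1 + u) := by field_simp; ring
    linarith [this ▸ hlog]
  rcases le_total u 1 with h | h
  · have : min u 1 = u := min_eq_left h
    rw [this]
    have : u ≤ 2 * (u / (1 + u)) := by
      rw [mul_div_assoc', le_div_iff₀ h1]; nlinarith
    linarith
  · have : min u 1 = 1 := min_eq_right h
    rw [this]
    have : (1 : ℝ) ≤ 2 * (u / (1 + u)) := by
      rw [mul_div_assoc', le_div_iff₀ h1]; nlinarith
    linarith

theorem elliptic_potential (d T : ℕ) (x : ℕ → Fin d → ℝ)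
    (H : Matrix (Fin d) (Fin d) ℝ) (hH : H.PosDef)
    (A : ℕ → Matrix (Fin d) (Fin d) ℝ)
    (hA : ∀ t, A t = H + ∑ s ∈ Finset.range t, vecMulVec (x s) (x s)) :
    ∑ t ∈ Finset.range T, min (x t ⬝ᵥ ((A t)⁻¹ *ᵥ x t)) 1 ≤
      2 * (Real.log (A T).det - Real.log H.det) := by
  have hsum : ∀ t, (∑ s ∈ Finset.range t, vecMulVec (x s) (x s)).PosSemidef := by
    intro t
    induction t with
    | zero => simpa using (Matrix.PosSemidef.zero : (0 : Matrix (Fin d) (Fin d) ℝ).PosSemidef)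
    | succ n ih =>
      rw [Finset.sum_range_succ]
      exact ih.add (vecMulVec_posSemidef (x n))
  have hApos : ∀ t, (A t).PosDef := by
    intro t
    rw [hA t]
    exact hH.add_posSemidef (hsum t)
  have hu : ∀ t, 0 ≤ x t ⬝ᵥ ((A t)⁻¹ *ᵥ x t) := by
    intro t
    have := ((hApos t).posSemidef.inv).dotProduct_mulVec_nonneg (x t)
    simpa using this
  -- determinant recurrence
  have hdet : ∀ t, (A (t + 1)).det = (A t).det * (1 + x t ⬝ᵥ ((A t)⁻¹ *ᵥ x t)) := by
    intro t
    have hstep : A (t + 1) = A t + replicateCol Unit (x t) * replicateRow Unit (x t) := by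
      rw [hA (t + 1), hA t, Finset.sum_range_succ, ← add_assoc, vecMulVec_eq Unit]
    have hU : IsUnit (A t).det := (hApos t).det_pos.ne'.isUnit
    rw [hstep, det_add_replicateCol_mul_replicateRow hU]
    congr 1
    rw [det_unique]
    have hsym : ∀ i j, (A t)⁻¹ i j = (A t)⁻¹ j i := by
      intro i j
      have h := (hApos t).inv.isHermitian
      conv_lhs => rw [← h]
      simp [conjTranspose_apply]
    simp [mul_apply, dotProduct, mulVec, Finset.mul_sum, Finset.sum_mul, mul_comm, mul_assoc,
      mul_left_comm]
    congr 1
    funext k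
    exact Finset.sum_congr rfl fun i _ => by rw [hsym i k]
  have hlogdet : ∀ t, Real.log (A (t + 1)).det =
      Real.log (A t).det + Real.log (1 + x t ⬝ᵥ ((A t)⁻¹ *ᵥ x t)) := by
    intro t
    rw [hdet t, Real.log_mul (hApos t).det_pos.ne' (by linarith [hu t] : (0:ℝ) < 1 + x t ⬝ᵥ ((A t)⁻¹ *ᵥ x t)).ne']
  have hA0 : A 0 = H := by simp [hA 0]
  calc ∑ t ∈ Finset.range T, min (x t ⬝ᵥ ((A t)⁻¹ *ᵥ x t)) 1
      ≤ ∑ t ∈ Finset.range T, 2 * Real.log (1 + x t ⬝ᵥ ((A t)⁻¹ *ᵥ x t)) := by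
        apply Finset.sum_le_sum
        intro t _
        exact min_le_two_log (hu t)
    _ = 2 * ∑ t ∈ Finset.range T, (Real.log (A (t + 1)).det - Real.log (A t).det) := by
        rw [Finset.mul_sum]
        congr 1
        ext t
        rw [hlogdet t]
        ring
    _ = 2 * (Real.log (A T).det - Real.log H.det) := by
        rw [Finset.sum_range_sub (fun t => Real.log (A t).det), hA0]
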